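/- Suppose X and Y are sets with maps f : X → X and g : Y → Y, and there exist maps r : X → Y, s : Y → X and m ≥ 1 with r∘f = g∘r, f∘s = s∘g, s∘r = f^m, and r∘s = g^m (a shift equivalence of lag m). Then the induced maps r̄ : X̄ → Ȳ given by (x₀,x₁,…) ↦ (r(x_m), r(x_{m+1}), …) and s̄ : Ȳ → X̄ given by (y₀,y₁,…) ↦ (s(y₀), s(y₁), …) satisfy s̄∘r̄ = id on X̄, r̄∘s̄ = id on Ȳ, and r̄∘f̄ = ḡ∘r̄. In particular r̄ is a conjugacy between (X̄, f̄) and (Ȳ, ḡ). -/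
import Mathlib


/-- The inverse limit of a self-map `f : X → X`. -/
def InvLim {X : Type*} (f : X → X) : Type _ :=
  {x : ℕ → X // ∀ n, f (x (n + 1)) = x n}

/-- The shift map `f̄(x₀,x₁,…) = (f(x₀),x₀,x₁,…)` on the inverse limit. -/
def shiftMap {X : Type*} (f : X → X) (x : InvLim f) : InvLim f :=
  ⟨fun n => Nat.casesOn n (f (x.1 0)) (fun k => x.1 k), by
    intro n
    cases n with
    | zero => rfl
    | succ k => exact x.2 k⟩

lemma invlim_iter {X : Type*} {f : X → X} (x : InvLim f) (k n : ℕ) :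
    f^[k] (x.1 (n + k)) = x.1 n := by
  induction k with
  | zero => rfl
  | succ k ih =>
      rw [Function.iterate_succ_apply, show n + (k + 1) = (n + k) + 1 from rfl,
        x.2 (n + k)]
      exact ih

/-- a shift equivalence `(r,s)` of lag `m` between `(X,f)` and `(Y,g)`
induces maps `r̄ : X̄ → Ȳ`, `(x₀,x₁,…) ↦ (r(x_m),r(x_{m+1}),…)` and
`s̄ : Ȳ → X̄`, `(y₀,y₁,…) ↦ (s(y₀),s(y₁),…)`, which are mutually inverse and
satisfy `r̄∘f̄ = ḡ∘r̄`; in particular `r̄` is a conjugacy of `(X̄,f̄)` and `(Ȳ,ḡ)`. -/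
theorem stmt4 {X Y : Type*} (f : X → X) (g : Y → Y) (r : X → Y) (s : Y → X)
    (m : ℕ) (hm : 1 ≤ m)
    (hrf : r ∘ f = g ∘ r) (hfs : f ∘ s = s ∘ g)
    (hsr : s ∘ r = f^[m]) (hrs : r ∘ s = g^[m]) :
    ∃ (rbar : InvLim f → InvLim g) (sbar : InvLim g → InvLim f),
      (∀ (x : InvLim f) (n : ℕ), (rbar x).1 n = r (x.1 (m + n))) ∧
      (∀ (y : InvLim g) (n : ℕ), (sbar y).1 n = s (y.1 n)) ∧
      sbar ∘ rbar = id ∧ rbar ∘ sbar = id ∧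
      rbar ∘ shiftMap f = shiftMap g ∘ rbar := by
  have hrf' : ∀ a, r (f a) = g (r a) := fun a => congrFun hrf a
  have hfs' : ∀ b, f (s b) = s (g b) := fun b => congrFun hfs b
  refine ⟨fun x => ⟨fun n => r (x.1 (m + n)), ?_⟩,
    fun y => ⟨fun n => s (y.1 n), ?_⟩, fun _ _ => rfl, fun _ _ => rfl, ?_, ?_, ?_⟩
  · intro n
    rw [← hrf', show m + (n + 1) = (m + n) + 1 from rfl, x.2 (m + n)]
  · intro n
    rw [hfs', y.2 n]
  · funext x
    apply Subtype.ext
    funext n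
    show s (r (x.1 (m + n))) = x.1 n
    rw [show s (r (x.1 (m + n))) = (s ∘ r) (x.1 (m + n)) from rfl, hsr,
      show m + n = n + m by omega]
    exact invlim_iter x m n
  · funext y
    apply Subtype.ext
    funext n
    show r (s (y.1 (m + n))) = y.1 n
    rw [show r (s (y.1 (m + n))) = (r ∘ s) (y.1 (m + n)) from rfl, hrs,
      show m + n = n + m by omega]
    exact invlim_iter y m n
  · funext x
    apply Subtype.ext
    funext n
    cases n with
    | zero =>
        show r ((shiftMap f x).1 (m + 0)) = g (r (x.1 (m + 0)))
        obtain ⟨k, rfl⟩ : ∃ k, m = k + 1 := ⟨m - 1, by omega⟩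
        show r (x.1 k) = g (r (x.1 (k + 1)))
        rw [← hrf', x.2 k]
    | succ n =>
        show r ((shiftMap f x).1 (m + (n + 1))) = r (x.1 (m + n))
        rw [show m + (n + 1) = (m + n) + 1 from rfl]
        rfl
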